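/- Let k > 0, let c₀, w₀ ∈ ℝ with c₀ > w₀², and let ξ ∈ ℝ. Define Ω_{n,ξ} = (n+ξ)((n+ξ)² - 1) k³ (c₀ - w₀²) / (1 + k²(n+ξ)²). Then the identity Ω_{-2,ξ} - Ω_{0,ξ} = -2 k³ (ξ - 1)² (3 - 2k²ξ + k²ξ²)(c₀ - w₀²) / ( (k²(ξ - 2)² + 1)(k²ξ² + 1) ) holds; moreover, if additionally ξ ∈ (0, 1/2] and k² < 3, then Ω_{-2,ξ} - Ω_{0,ξ} < 0. -/
import Mathlib


/-- For `k > 0`, `c₀ > w₀²`, `ξ ∈ ℝ` and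
`Ω n = (n+ξ)((n+ξ)² - 1) k³ (c₀ - w₀²)/(1 + k²(n+ξ)²)`, the identity
`Ω(-2) - Ω(0) = -2k³(ξ-1)²(3 - 2k²ξ + k²ξ²)(c₀ - w₀²)/((k²(ξ-2)² + 1)(k²ξ² + 1))` holds;
moreover if `ξ ∈ (0, 1/2]` and `k² < 3` then `Ω(-2) - Ω(0) < 0`. -/
theorem stmt14 (k c₀ w₀ ξ : ℝ) (hk : 0 < k) (hcw : w₀ ^ 2 < c₀)
    (Ω : ℤ → ℝ)
    (hΩ : ∀ n : ℤ, Ω n = ((n : ℝ) + ξ) * (((n : ℝ) + ξ) ^ 2 - 1) * k ^ 3 * (c₀ - w₀ ^ 2) /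
        (1 + k ^ 2 * ((n : ℝ) + ξ) ^ 2)) :
    Ω (-2) - Ω 0 =
      -2 * k ^ 3 * (ξ - 1) ^ 2 * (3 - 2 * k ^ 2 * ξ + k ^ 2 * ξ ^ 2) * (c₀ - w₀ ^ 2) /
        ((k ^ 2 * (ξ - 2) ^ 2 + 1) * (k ^ 2 * ξ ^ 2 + 1)) ∧
    (ξ ∈ Set.Ioc (0:ℝ) (1 / 2) → k ^ 2 < 3 → Ω (-2) - Ω 0 < 0) := by
  have h2 : (0:ℝ) < 1 + k ^ 2 * ((-2 : ℝ) + ξ) ^ 2 := by positivity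
  have h0 : (0:ℝ) < 1 + k ^ 2 * ((0 : ℝ) + ξ) ^ 2 := by positivity
  have heq : Ω (-2) - Ω 0 =
      -2 * k ^ 3 * (ξ - 1) ^ 2 * (3 - 2 * k ^ 2 * ξ + k ^ 2 * ξ ^ 2) * (c₀ - w₀ ^ 2) /
        ((k ^ 2 * (ξ - 2) ^ 2 + 1) * (k ^ 2 * ξ ^ 2 + 1)) := by
    rw [hΩ (-2), hΩ 0]
    push_cast
    rw [div_sub_div _ _ (ne_of_gt h2) (ne_of_gt h0), div_eq_div_iff (by positivity) (by positivity)]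
    ring
  refine ⟨heq, fun hξ hk3 => ?_⟩
  rw [heq]
  obtain ⟨hξ0, hξh⟩ := hξ
  have hne : ξ ≠ 1 := by linarith
  have hfac : 0 < 3 - 2 * k ^ 2 * ξ + k ^ 2 * ξ ^ 2 := by
    nlinarith [sq_nonneg k, sq_nonneg (ξ - 1), mul_pos hk hk]
  have hnum : -2 * k ^ 3 * (ξ - 1) ^ 2 * (3 - 2 * k ^ 2 * ξ + k ^ 2 * ξ ^ 2) * (c₀ - w₀ ^ 2) < 0 := by
    have h1 : 0 < (ξ - 1) ^ 2 := by nlinarith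
    have hc : 0 < c₀ - w₀ ^ 2 := by linarith
    have hp := mul_pos (mul_pos (mul_pos (pow_pos hk 3) h1) hfac) hc
    nlinarith [hp]
  exact div_neg_of_neg_of_pos hnum (by positivity)
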